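/- Let (λ, ρ, φ_λ, φ_ρ, φ_λρ) be a quasi-commuting pair of coactions of a quasi-Hopf algebra G on M and q_ρ = φ_ρ¹ ⊗ S⁻¹(αφ_ρ³)φ_ρ² ∈ M ⊗ G. Then (λ ⊗ id_G)(q_ρ)·φ_λρ⁻¹ = (1_G ⊗ 1_M ⊗ S⁻¹(φ_λρ³))·(φ_λρ¹ ⊗ q_ρ·ρ(φ_λρ²)) in G ⊗ M ⊗ G, where φ_λρ = φ_λρ¹ ⊗ φ_λρ² ⊗ φ_λρ³. -/

import Mathlib

open TensorProduct

set_option maxHeartbeats 1000000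

noncomputable section

/-- A quasi-bialgebra structure (Drinfeld) on an algebra `G` over `ℂ`: algebra maps
`Δ : G → G ⊗ G` and `ε : G → ℂ`, together with an invertible reassociator
`φ ∈ G ⊗ G ⊗ G` satisfying quasi-coassociativity, the pentagon identity and the counit
axioms. -/
structure QuasiBialg (G : Type*) [Ring G] [Algebra ℂ G] where
  comul : G →ₐ[ℂ] G ⊗[ℂ] G
  counit : G →ₐ[ℂ] ℂ
  assocEl : G ⊗[ℂ] (G ⊗[ℂ] G)
  assocElInv : G ⊗[ℂ] (G ⊗[ℂ] G)
  assocEl_mul_inv : assocEl * assocElInv = 1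
  assocEl_inv_mul : assocElInv * assocEl = 1
  quasiCoassoc : ∀ a : G,
    TensorProduct.map LinearMap.id comul.toLinearMap (comul a) * assocEl =
      assocEl *
        (TensorProduct.assoc ℂ G G G)
          (TensorProduct.map comul.toLinearMap LinearMap.id (comul a))
  counit_comul_left : ∀ a : G,
    (TensorProduct.lid ℂ G)
      (TensorProduct.map counit.toLinearMap LinearMap.id (comul a)) = a
  counit_comul_right : ∀ a : G,
    (TensorProduct.rid ℂ G)
      (TensorProduct.map LinearMap.id counit.toLinearMap (comul a)) = a
  counit_assocEl :
    TensorProduct.map LinearMap.id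
        ((TensorProduct.lid ℂ G).toLinearMap ∘ₗ
          TensorProduct.map counit.toLinearMap LinearMap.id) assocEl =
      (1 : G ⊗[ℂ] G)
  pentagon :
    TensorProduct.map LinearMap.id
          (TensorProduct.map LinearMap.id comul.toLinearMap) assocEl *
        (TensorProduct.assoc ℂ G G (G ⊗[ℂ] G))
          (TensorProduct.map comul.toLinearMap LinearMap.id assocEl) =
      ((1 : G) ⊗ₜ[ℂ] assocEl) *
        TensorProduct.map LinearMap.id (TensorProduct.assoc ℂ G G G).toLinearMap
          (TensorProduct.map LinearMap.id
            (TensorProduct.map comul.toLinearMap LinearMap.id) assocEl) *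
        TensorProduct.map LinearMap.id (TensorProduct.assoc ℂ G G G).toLinearMap
          ((TensorProduct.assoc ℂ G (G ⊗[ℂ] G) G) (assocEl ⊗ₜ[ℂ] (1 : G)))

/-- A quasi-Hopf algebra structure (Drinfeld) on an algebra `G` over `ℂ`: a quasi-bialgebra
together with an invertible algebra antimorphism `S` and elements `α, β ∈ G` satisfying the
antipode axioms. -/
structure QuasiHopf (G : Type*) [Ring G] [Algebra ℂ G] extends QuasiBialg G where
  S : G →ₗ[ℂ] G
  S_one : S 1 = 1
  S_mul : ∀ a b : G, S (a * b) = S b * S a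
  Sinv : G →ₗ[ℂ] G
  Sinv_S : ∀ a : G, Sinv (S a) = a
  S_Sinv : ∀ a : G, S (Sinv a) = a
  alphaEl : G
  betaEl : G
  antipode_left : ∀ a : G,
    LinearMap.mul' ℂ G
        (TensorProduct.map (LinearMap.mulRight ℂ alphaEl ∘ₗ S) LinearMap.id (comul a)) =
      counit a • alphaEl
  antipode_right : ∀ a : G,
    LinearMap.mul' ℂ G
        (TensorProduct.map (LinearMap.mulRight ℂ betaEl) S (comul a)) =
      counit a • betaEl
  antipode_assocEl :
    (LinearMap.mul' ℂ G ∘ₗ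
        TensorProduct.map (LinearMap.mulRight ℂ betaEl)
          (LinearMap.mul' ℂ G ∘ₗ
            TensorProduct.map (LinearMap.mulRight ℂ alphaEl ∘ₗ S) LinearMap.id))
      assocEl = 1
  antipode_assocElInv :
    (LinearMap.mul' ℂ G ∘ₗ
        TensorProduct.map (LinearMap.mulRight ℂ alphaEl ∘ₗ S)
          (LinearMap.mul' ℂ G ∘ₗ
            TensorProduct.map (LinearMap.mulRight ℂ betaEl) S))
      assocElInv = 1

/-- A left coaction `(λ, φ_λ)` of a quasi-bialgebra `Q` on an algebra `M`: an algebra map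
`λ : M → G ⊗ M` with invertible reassociator `φ_λ ∈ G ⊗ G ⊗ M` satisfying the intertwining
relation, the mixed pentagon identity and the counit axioms. -/
structure LeftQCoaction (G M : Type*) [Ring G] [Algebra ℂ G] [Ring M] [Algebra ℂ M]
    (Q : QuasiBialg G) where
  lam : M →ₐ[ℂ] G ⊗[ℂ] M
  phiL : G ⊗[ℂ] (G ⊗[ℂ] M)
  phiLInv : G ⊗[ℂ] (G ⊗[ℂ] M)
  phiL_mul_inv : phiL * phiLInv = 1
  phiL_inv_mul : phiLInv * phiL = 1
  intertwine : ∀ m : M,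
    TensorProduct.map LinearMap.id lam.toLinearMap (lam m) * phiL =
      phiL *
        (TensorProduct.assoc ℂ G G M)
          (TensorProduct.map Q.comul.toLinearMap LinearMap.id (lam m))
  pentagon :
    ((1 : G) ⊗ₜ[ℂ] phiL) *
        TensorProduct.map LinearMap.id (TensorProduct.assoc ℂ G G M).toLinearMap
          (TensorProduct.map LinearMap.id
            (TensorProduct.map Q.comul.toLinearMap LinearMap.id) phiL) *
        TensorProduct.map LinearMap.id (TensorProduct.assoc ℂ G G M).toLinearMap
          ((TensorProduct.assoc ℂ G (G ⊗[ℂ] G) M) (Q.assocEl ⊗ₜ[ℂ] (1 : M))) =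
      TensorProduct.map LinearMap.id
          (TensorProduct.map LinearMap.id lam.toLinearMap) phiL *
        (TensorProduct.assoc ℂ G G (G ⊗[ℂ] M))
          (TensorProduct.map Q.comul.toLinearMap LinearMap.id phiL)
  counit_lam : ∀ m : M,
    (TensorProduct.lid ℂ M)
      (TensorProduct.map Q.counit.toLinearMap LinearMap.id (lam m)) = m
  counit_phiL_mid :
    TensorProduct.map LinearMap.id
        ((TensorProduct.lid ℂ M).toLinearMap ∘ₗ
          TensorProduct.map Q.counit.toLinearMap LinearMap.id) phiL =
      (1 : G ⊗[ℂ] M)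
  counit_phiL_left :
    (TensorProduct.lid ℂ (G ⊗[ℂ] M))
        (TensorProduct.map Q.counit.toLinearMap LinearMap.id phiL) =
      (1 : G ⊗[ℂ] M)

/-- A right coaction `(ρ, φ_ρ)` of a quasi-bialgebra `Q` on an algebra `M`: an algebra map
`ρ : M → M ⊗ G` with invertible reassociator `φ_ρ ∈ M ⊗ G ⊗ G` satisfying the intertwining
relation, the mixed pentagon identity and the counit axioms. -/
structure RightQCoaction (G M : Type*) [Ring G] [Algebra ℂ G] [Ring M] [Algebra ℂ M]
    (Q : QuasiBialg G) where
  rho : M →ₐ[ℂ] M ⊗[ℂ] G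
  phiR : M ⊗[ℂ] (G ⊗[ℂ] G)
  phiRInv : M ⊗[ℂ] (G ⊗[ℂ] G)
  phiR_mul_inv : phiR * phiRInv = 1
  phiR_inv_mul : phiRInv * phiR = 1
  intertwine : ∀ m : M,
    phiR *
        (TensorProduct.assoc ℂ M G G)
          (TensorProduct.map rho.toLinearMap LinearMap.id (rho m)) =
      TensorProduct.map LinearMap.id Q.comul.toLinearMap (rho m) * phiR
  pentagon :
    ((1 : M) ⊗ₜ[ℂ] Q.assocEl) *
        TensorProduct.map LinearMap.id (TensorProduct.assoc ℂ G G G).toLinearMap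
          (TensorProduct.map LinearMap.id
            (TensorProduct.map Q.comul.toLinearMap LinearMap.id) phiR) *
        TensorProduct.map LinearMap.id (TensorProduct.assoc ℂ G G G).toLinearMap
          ((TensorProduct.assoc ℂ M (G ⊗[ℂ] G) G) (phiR ⊗ₜ[ℂ] (1 : G))) =
      TensorProduct.map LinearMap.id
          (TensorProduct.map LinearMap.id Q.comul.toLinearMap) phiR *
        (TensorProduct.assoc ℂ M G (G ⊗[ℂ] G))
          (TensorProduct.map rho.toLinearMap LinearMap.id phiR)
  counit_rho : ∀ m : M,
    (TensorProduct.rid ℂ M)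
      (TensorProduct.map LinearMap.id Q.counit.toLinearMap (rho m)) = m
  counit_phiR_mid :
    TensorProduct.map LinearMap.id
        ((TensorProduct.lid ℂ G).toLinearMap ∘ₗ
          TensorProduct.map Q.counit.toLinearMap LinearMap.id) phiR =
      (1 : M ⊗[ℂ] G)
  counit_phiR_right :
    TensorProduct.map LinearMap.id
        ((TensorProduct.rid ℂ G).toLinearMap ∘ₗ
          TensorProduct.map LinearMap.id Q.counit.toLinearMap) phiR =
      (1 : M ⊗[ℂ] G)

variable {G M : Type*} [Ring G] [Algebra ℂ G] [Ring M] [Algebra ℂ M]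

/-- The element `q_ρ = φ_ρ¹ ⊗ S⁻¹(α φ_ρ³) φ_ρ² ∈ M ⊗ G`. -/
def qRho (Q : QuasiHopf G) (R : RightQCoaction G M Q.toQuasiBialg) : M ⊗[ℂ] G :=
  TensorProduct.map LinearMap.id
    (LinearMap.mul' ℂ G ∘ₗ
      TensorProduct.map (Q.Sinv ∘ₗ LinearMap.mulLeft ℂ Q.alphaEl) LinearMap.id ∘ₗ
      (TensorProduct.comm ℂ G G).toLinearMap)
    R.phiR

/-- For `n ⊗ y ∈ M ⊗ G`, the element `(1_M ⊗ S⁻¹(y))·t·ρ(n) ∈ M ⊗ G` (extended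
bilinearly). -/
def thetaRQ (Q : QuasiHopf G) (R : RightQCoaction G M Q.toQuasiBialg) (t : M ⊗[ℂ] G) :
    M ⊗[ℂ] G →ₗ[ℂ] M ⊗[ℂ] G :=
  TensorProduct.lift (LinearMap.mul ℂ (M ⊗[ℂ] G) ∘ₗ LinearMap.mulRight ℂ t) ∘ₗ
    TensorProduct.map (TensorProduct.mk ℂ M G (1 : M) ∘ₗ Q.Sinv) R.rho.toLinearMap ∘ₗ
    (TensorProduct.comm ℂ M G).toLinearMap

section Statement18Aux

set_option synthInstance.maxHeartbeats 1000000
set_option maxSynthPendingDepth 3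
set_option maxRecDepth 8000

variable {G M : Type*} [Ring G] [Algebra ℂ G] [Ring M] [Algebra ℂ M]

lemma Sinv_one (Q : QuasiHopf G) : Q.Sinv 1 = 1 := by
  have h := Q.Sinv_S 1
  rwa [Q.S_one] at h

lemma Sinv_mul (Q : QuasiHopf G) (x y : G) :
    Q.Sinv (x * y) = Q.Sinv y * Q.Sinv x := by
  have h : Q.S (Q.Sinv y * Q.Sinv x) = x * y := by
    rw [Q.S_mul, Q.S_Sinv, Q.S_Sinv]
  rw [← h, Q.Sinv_S]

/-- `g(x ⊗ z) = S⁻¹(α z) x`. -/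
def gmap (Q : QuasiHopf G) : G ⊗[ℂ] G →ₗ[ℂ] G :=
  LinearMap.mul' ℂ G ∘ₗ
    TensorProduct.map (Q.Sinv ∘ₗ LinearMap.mulLeft ℂ Q.alphaEl) LinearMap.id ∘ₗ
    (TensorProduct.comm ℂ G G).toLinearMap

lemma gmap_tmul (Q : QuasiHopf G) (x z : G) :
    gmap Q (x ⊗ₜ[ℂ] z) = Q.Sinv (Q.alphaEl * z) * x := by
  simp [gmap]

lemma gmap_mul_tmul (Q : QuasiHopf G) (w : G ⊗[ℂ] G) (x z : G) :
    gmap Q (w * (x ⊗ₜ[ℂ] z)) = Q.Sinv z * gmap Q w * x := by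
  induction w using TensorProduct.induction_on with
  | zero => simp
  | tmul a c =>
      rw [Algebra.TensorProduct.tmul_mul_tmul, gmap_tmul, gmap_tmul,
        ← mul_assoc Q.alphaEl c z, Sinv_mul]
      simp [mul_assoc]
  | add u v hu hv => simp [add_mul, hu, hv, mul_add]

lemma gmap_eq_Sinv (Q : QuasiHopf G) (u : G ⊗[ℂ] G) :
    gmap Q u =
      Q.Sinv (LinearMap.mul' ℂ G
        (TensorProduct.map (LinearMap.mulRight ℂ Q.alphaEl ∘ₗ Q.S) LinearMap.id u)) := by
  induction u using TensorProduct.induction_on with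
  | zero => simp [Sinv_one]  -- Sinv 0 = 0 by linearity: map_zero
  | tmul x z =>
      rw [gmap_tmul]
      simp only [TensorProduct.map_tmul, LinearMap.comp_apply, LinearMap.mulRight_apply,
        LinearMap.id_coe, id_eq, LinearMap.mul'_apply]
      rw [Sinv_mul, Sinv_mul, Sinv_mul, Q.Sinv_S, mul_assoc]
  | add u v hu hv => simp [hu, hv]

lemma gmap_comul (Q : QuasiHopf G) (b : G) :
    gmap Q (Q.comul b) = Q.counit b • Q.Sinv Q.alphaEl := by
  rw [gmap_eq_Sinv, Q.antipode_left, map_smul]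

lemma gmap_comul_mul (Q : QuasiHopf G) (b : G) (u : G ⊗[ℂ] G) :
    gmap Q (Q.comul b * u) = Q.counit b • gmap Q u := by
  induction u using TensorProduct.induction_on with
  | zero => simp
  | tmul x z =>
      rw [gmap_mul_tmul, gmap_comul, gmap_tmul, Sinv_mul]
      simp [smul_mul_assoc, mul_smul_comm, mul_assoc]
  | add u v hu hv => simp [mul_add, hu, hv]

/-- `F = id_M ⊗ g`. -/
def Fm (Q : QuasiHopf G) : M ⊗[ℂ] (G ⊗[ℂ] G) →ₗ[ℂ] M ⊗[ℂ] G :=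
  TensorProduct.map LinearMap.id (gmap Q)

lemma qRho_eq (Q : QuasiHopf G) (R : RightQCoaction G M Q.toQuasiBialg) :
    qRho Q R = Fm Q R.phiR := rfl

lemma Fm_tmul (Q : QuasiHopf G) (m : M) (u : G ⊗[ℂ] G) :
    Fm Q (m ⊗ₜ[ℂ] u) = m ⊗ₜ[ℂ] gmap Q u := by simp [Fm]

lemma Fm_mul_tmul (Q : QuasiHopf G) (t : M ⊗[ℂ] (G ⊗[ℂ] G)) (n : M) (x y : G) :
    Fm Q (t * (n ⊗ₜ[ℂ] (x ⊗ₜ[ℂ] y))) =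
      ((1 : M) ⊗ₜ[ℂ] Q.Sinv y) * Fm Q t * (n ⊗ₜ[ℂ] x) := by
  induction t using TensorProduct.induction_on with
  | zero => simp
  | tmul m w =>
      rw [Algebra.TensorProduct.tmul_mul_tmul, Fm_tmul, Fm_tmul, gmap_mul_tmul]
      simp [Algebra.TensorProduct.tmul_mul_tmul]
  | add u v hu hv => simp [add_mul, hu, hv, mul_add]

lemma Fm_comul_mul (Q : QuasiHopf G) (m : M) (b : G) (t : M ⊗[ℂ] (G ⊗[ℂ] G)) :
    Fm Q ((m ⊗ₜ[ℂ] Q.comul b) * t) =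
      Q.counit b • ((m ⊗ₜ[ℂ] (1 : G)) * Fm Q t) := by
  induction t using TensorProduct.induction_on with
  | zero => simp
  | tmul n w =>
      rw [Algebra.TensorProduct.tmul_mul_tmul, Fm_tmul, Fm_tmul, gmap_comul_mul]
      simp [Algebra.TensorProduct.tmul_mul_tmul, tmul_smul]
  | add u v hu hv => simp [mul_add, hu, hv]

/-- `FF = id_G ⊗ F`. -/
def FF (Q : QuasiHopf G) :
    G ⊗[ℂ] (M ⊗[ℂ] (G ⊗[ℂ] G)) →ₗ[ℂ] G ⊗[ℂ] (M ⊗[ℂ] G) :=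
  TensorProduct.map LinearMap.id (Fm Q)

lemma FF_tmul (Q : QuasiHopf G) (a : G) (s : M ⊗[ℂ] (G ⊗[ℂ] G)) :
    FF Q (a ⊗ₜ[ℂ] s) = a ⊗ₜ[ℂ] Fm Q s := by simp [FF]

lemma FF_mul_tmul (Q : QuasiHopf G) (u : G ⊗[ℂ] (M ⊗[ℂ] (G ⊗[ℂ] G)))
    (c : G) (n : M) (x y : G) :
    FF Q (u * (c ⊗ₜ[ℂ] (n ⊗ₜ[ℂ] (x ⊗ₜ[ℂ] y)))) =
      ((1 : G) ⊗ₜ[ℂ] ((1 : M) ⊗ₜ[ℂ] Q.Sinv y)) * FF Q u * (c ⊗ₜ[ℂ] (n ⊗ₜ[ℂ] x)) := by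
  induction u using TensorProduct.induction_on with
  | zero => simp
  | tmul a s =>
      rw [Algebra.TensorProduct.tmul_mul_tmul, FF_tmul, FF_tmul, Fm_mul_tmul]
      simp [Algebra.TensorProduct.tmul_mul_tmul]
  | add u v hu hv => simp [add_mul, hu, hv, mul_add]

lemma FF_comul_mul (Q : QuasiHopf G) (c : G) (m : M) (b : G)
    (p : G ⊗[ℂ] (M ⊗[ℂ] (G ⊗[ℂ] G))) :
    FF Q ((c ⊗ₜ[ℂ] (m ⊗ₜ[ℂ] Q.comul b)) * p) =
      Q.counit b • ((c ⊗ₜ[ℂ] (m ⊗ₜ[ℂ] (1 : G))) * FF Q p) := by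
  induction p using TensorProduct.induction_on with
  | zero => simp
  | tmul a s =>
      rw [Algebra.TensorProduct.tmul_mul_tmul, FF_tmul, FF_tmul, Fm_comul_mul]
      simp [Algebra.TensorProduct.tmul_mul_tmul, tmul_smul]
  | add u v hu hv => simp [mul_add, hu, hv]

/-- Structural lemma for the third factor of the pentagon LHS. -/
lemma FF_L1 (Q : QuasiHopf G) (u : G ⊗[ℂ] (M ⊗[ℂ] (G ⊗[ℂ] G))) (T : G ⊗[ℂ] (M ⊗[ℂ] G)) :
    FF Q (u *
        TensorProduct.map LinearMap.id (TensorProduct.assoc ℂ M G G).toLinearMap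
          ((TensorProduct.assoc ℂ G (M ⊗[ℂ] G) G) (T ⊗ₜ[ℂ] (1 : G)))) =
      FF Q u * T := by
  induction T using TensorProduct.induction_on with
  | zero => simp
  | tmul c v =>
      induction v using TensorProduct.induction_on with
      | zero => simp
      | tmul n x =>
          simp only [TensorProduct.assoc_tmul, TensorProduct.map_tmul, LinearMap.id_coe,
            id_eq, LinearEquiv.coe_coe]
          rw [FF_mul_tmul, Sinv_one]
          simp [← Algebra.TensorProduct.one_def]
      | add v₁ v₂ h₁ h₂ =>
          simp only [TensorProduct.tmul_add, TensorProduct.add_tmul, map_add, mul_add] at h₁ h₂ ⊢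
          rw [h₁, h₂]
  | add T₁ T₂ h₁ h₂ =>
      simp only [TensorProduct.add_tmul, map_add, mul_add] at h₁ h₂ ⊢
      rw [h₁, h₂]

lemma thetaRQ_tmul (Q : QuasiHopf G) (R : RightQCoaction G M Q.toQuasiBialg)
    (t : M ⊗[ℂ] G) (n : M) (y : G) :
    thetaRQ Q R t (n ⊗ₜ[ℂ] y) = ((1 : M) ⊗ₜ[ℂ] Q.Sinv y) * t * R.rho n := by
  simp [thetaRQ, LinearMap.mul_apply']

lemma Fm_phiR_assoc (Q : QuasiHopf G) (R : RightQCoaction G M Q.toQuasiBialg)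
    (v : M ⊗[ℂ] G) (y : G) :
    Fm Q (R.phiR * (TensorProduct.assoc ℂ M G G) (v ⊗ₜ[ℂ] y)) =
      ((1 : M) ⊗ₜ[ℂ] Q.Sinv y) * qRho Q R * v := by
  induction v using TensorProduct.induction_on with
  | zero => simp
  | tmul n x =>
      rw [TensorProduct.assoc_tmul, Fm_mul_tmul, qRho_eq]
  | add v₁ v₂ h₁ h₂ =>
      simp only [TensorProduct.add_tmul, map_add, mul_add] at h₁ h₂ ⊢
      rw [h₁, h₂]

/-- Structural lemma for the first two factors of the pentagon LHS. -/
lemma FF_L2 (Q : QuasiHopf G) (R : RightQCoaction G M Q.toQuasiBialg)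
    (T : G ⊗[ℂ] (M ⊗[ℂ] G)) :
    FF Q (((1 : G) ⊗ₜ[ℂ] R.phiR) *
        TensorProduct.map LinearMap.id
          ((TensorProduct.assoc ℂ M G G).toLinearMap ∘ₗ
            TensorProduct.map R.rho.toLinearMap LinearMap.id) T) =
      TensorProduct.map LinearMap.id (thetaRQ Q R (qRho Q R)) T := by
  induction T using TensorProduct.induction_on with
  | zero => simp
  | tmul c v =>
      induction v using TensorProduct.induction_on with
      | zero => simp
      | tmul n y =>
          simp only [TensorProduct.map_tmul, LinearMap.comp_apply, LinearMap.id_coe, id_eq,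
            LinearEquiv.coe_coe, AlgHom.toLinearMap_apply]
          rw [Algebra.TensorProduct.tmul_mul_tmul, one_mul, FF_tmul, Fm_phiR_assoc,
            thetaRQ_tmul]
      | add v₁ v₂ h₁ h₂ =>
          simp only [TensorProduct.tmul_add, map_add, mul_add] at h₁ h₂ ⊢
          rw [h₁, h₂]
  | add T₁ T₂ h₁ h₂ =>
      simp only [map_add, mul_add] at h₁ h₂ ⊢
      rw [h₁, h₂]

/-- `EE = id ⊗ id ⊗ (algebraMap ∘ ε)`. -/
def EE (Q : QuasiHopf G) : G ⊗[ℂ] (M ⊗[ℂ] G) →ₗ[ℂ] G ⊗[ℂ] (M ⊗[ℂ] G) :=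
  TensorProduct.map LinearMap.id
    (TensorProduct.map LinearMap.id
      (Algebra.linearMap ℂ G ∘ₗ Q.counit.toLinearMap))

lemma EE_tmul (Q : QuasiHopf G) (c : G) (n : M) (y : G) :
    EE Q (c ⊗ₜ[ℂ] (n ⊗ₜ[ℂ] y)) = Q.counit y • (c ⊗ₜ[ℂ] (n ⊗ₜ[ℂ] (1 : G))) := by
  simp [EE, Algebra.algebraMap_eq_smul_one, tmul_smul]

/-- Structural lemma for the first factor of the pentagon RHS. -/
lemma FF_L3 (Q : QuasiHopf G) (T : G ⊗[ℂ] (M ⊗[ℂ] G))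
    (p : G ⊗[ℂ] (M ⊗[ℂ] (G ⊗[ℂ] G))) :
    FF Q (TensorProduct.map LinearMap.id
        (TensorProduct.map LinearMap.id Q.comul.toLinearMap) T * p) =
      EE Q T * FF Q p := by
  induction T using TensorProduct.induction_on with
  | zero => simp
  | tmul c v =>
      induction v using TensorProduct.induction_on with
      | zero => simp
      | tmul n y =>
          simp only [TensorProduct.map_tmul, LinearMap.id_coe, id_eq,
            AlgHom.toLinearMap_apply]
          rw [FF_comul_mul, EE_tmul, smul_mul_assoc]
      | add v₁ v₂ h₁ h₂ =>
          simp only [TensorProduct.tmul_add, map_add, add_mul] at h₁ h₂ ⊢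
          rw [h₁, h₂]
  | add T₁ T₂ h₁ h₂ =>
      simp only [map_add, add_mul] at h₁ h₂ ⊢
      rw [h₁, h₂]

lemma FF_assoc (Q : QuasiHopf G) (l : G ⊗[ℂ] M) (w : G ⊗[ℂ] G) :
    FF Q ((TensorProduct.assoc ℂ G M (G ⊗[ℂ] G)) (l ⊗ₜ[ℂ] w)) =
      (TensorProduct.assoc ℂ G M G) (l ⊗ₜ[ℂ] gmap Q w) := by
  induction l using TensorProduct.induction_on with
  | zero => simp
  | tmul a n => rw [TensorProduct.assoc_tmul, TensorProduct.assoc_tmul, FF_tmul, Fm_tmul]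
  | add l₁ l₂ h₁ h₂ =>
      simp only [TensorProduct.add_tmul, map_add] at h₁ h₂ ⊢
      rw [h₁, h₂]

/-- Structural lemma for the second factor of the pentagon RHS. -/
lemma FF_L4 (Q : QuasiHopf G) (L : LeftQCoaction G M Q.toQuasiBialg)
    (R : RightQCoaction G M Q.toQuasiBialg) :
    FF Q ((TensorProduct.assoc ℂ G M (G ⊗[ℂ] G))
        (TensorProduct.map L.lam.toLinearMap LinearMap.id R.phiR)) =
      (TensorProduct.assoc ℂ G M G)
        (TensorProduct.map L.lam.toLinearMap LinearMap.id (qRho Q R)) := by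
  rw [qRho_eq]
  induction R.phiR using TensorProduct.induction_on with
  | zero => simp
  | tmul m w =>
      rw [TensorProduct.map_tmul, FF_assoc, Fm_tmul, TensorProduct.map_tmul]
      simp
  | add s₁ s₂ h₁ h₂ =>
      simp only [map_add] at h₁ h₂ ⊢
      rw [h₁, h₂]

/-- Algebra morphism applying the counit to the third tensor slot. -/
def eps3 (Q : QuasiHopf G) :
    (G ⊗[ℂ] (M ⊗[ℂ] (G ⊗[ℂ] G))) →ₐ[ℂ] G ⊗[ℂ] (M ⊗[ℂ] G) :=
  Algebra.TensorProduct.map (AlgHom.id ℂ G)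
    (Algebra.TensorProduct.map (AlgHom.id ℂ M)
      ((Algebra.TensorProduct.lid ℂ G).toAlgHom.comp
        (Algebra.TensorProduct.map Q.counit (AlgHom.id ℂ G))))

/-- The linear counit-in-the-middle map appearing in `counit_phiR_mid`. -/
def IL (Q : QuasiHopf G) : M ⊗[ℂ] (G ⊗[ℂ] G) →ₗ[ℂ] M ⊗[ℂ] G :=
  TensorProduct.map LinearMap.id
    ((TensorProduct.lid ℂ G).toLinearMap ∘ₗ
      TensorProduct.map Q.counit.toLinearMap LinearMap.id)

lemma IL_tmul (Q : QuasiHopf G) (m : M) (u : G ⊗[ℂ] G) :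
    IL Q (m ⊗ₜ[ℂ] u) =
      m ⊗ₜ[ℂ] (TensorProduct.lid ℂ G)
        (TensorProduct.map Q.counit.toLinearMap LinearMap.id u) := by
  simp [IL]

lemma eps3_tmul (Q : QuasiHopf G) (a : G) (s : M ⊗[ℂ] (G ⊗[ℂ] G)) :
    eps3 Q (a ⊗ₜ[ℂ] s) = a ⊗ₜ[ℂ] IL Q s := by
  induction s using TensorProduct.induction_on with
  | zero => simp [eps3]
  | tmul m u =>
      induction u using TensorProduct.induction_on with
      | zero => simp [eps3]
      | tmul x z => simp [eps3, IL_tmul]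
      | add u₁ u₂ h₁ h₂ =>
          simp only [TensorProduct.tmul_add, map_add] at h₁ h₂ ⊢
          rw [h₁, h₂]
  | add s₁ s₂ h₁ h₂ =>
      simp only [TensorProduct.tmul_add, map_add] at h₁ h₂ ⊢
      rw [h₁, h₂]

lemma IL_assoc (Q : QuasiHopf G) (u : M ⊗[ℂ] G) (y : G) :
    IL Q ((TensorProduct.assoc ℂ M G G) (u ⊗ₜ[ℂ] y)) =
      ((TensorProduct.rid ℂ M)
        (TensorProduct.map LinearMap.id Q.counit.toLinearMap u)) ⊗ₜ[ℂ] y := by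
  induction u using TensorProduct.induction_on with
  | zero => simp
  | tmul n x =>
      rw [TensorProduct.assoc_tmul, IL_tmul]
      simp only [TensorProduct.map_tmul, LinearMap.id_coe, id_eq, AlgHom.toLinearMap_apply,
        TensorProduct.lid_tmul, TensorProduct.rid_tmul]
      rw [TensorProduct.smul_tmul]
  | add u₁ u₂ h₁ h₂ =>
      simp only [TensorProduct.add_tmul, map_add] at h₁ h₂ ⊢
      rw [h₁, h₂]

lemma eps3_A1 (Q : QuasiHopf G) (R : RightQCoaction G M Q.toQuasiBialg) :
    eps3 Q ((1 : G) ⊗ₜ[ℂ] R.phiR) = 1 := by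
  rw [eps3_tmul]
  rw [show IL Q R.phiR = 1 from R.counit_phiR_mid]
  exact (Algebra.TensorProduct.one_def).symm

lemma eps3_A2 (Q : QuasiHopf G) (R : RightQCoaction G M Q.toQuasiBialg)
    (T : G ⊗[ℂ] (M ⊗[ℂ] G)) :
    eps3 Q (TensorProduct.map LinearMap.id
        ((TensorProduct.assoc ℂ M G G).toLinearMap ∘ₗ
          TensorProduct.map R.rho.toLinearMap LinearMap.id) T) = T := by
  induction T using TensorProduct.induction_on with
  | zero => simp
  | tmul c v =>
      induction v using TensorProduct.induction_on with
      | zero => simp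
      | tmul n y =>
          simp only [TensorProduct.map_tmul, LinearMap.comp_apply, LinearMap.id_coe, id_eq,
            LinearEquiv.coe_coe, AlgHom.toLinearMap_apply]
          rw [eps3_tmul, IL_assoc, R.counit_rho]
      | add v₁ v₂ h₁ h₂ =>
          simp only [TensorProduct.tmul_add, map_add] at h₁ h₂ ⊢
          rw [h₁, h₂]
  | add T₁ T₂ h₁ h₂ =>
      simp only [map_add] at h₁ h₂ ⊢
      rw [h₁, h₂]

lemma eps3_A3 (Q : QuasiHopf G) (T : G ⊗[ℂ] (M ⊗[ℂ] G)) :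
    eps3 Q (TensorProduct.map LinearMap.id (TensorProduct.assoc ℂ M G G).toLinearMap
        ((TensorProduct.assoc ℂ G (M ⊗[ℂ] G) G) (T ⊗ₜ[ℂ] (1 : G)))) = EE Q T := by
  induction T using TensorProduct.induction_on with
  | zero => simp
  | tmul c v =>
      induction v using TensorProduct.induction_on with
      | zero => simp
      | tmul n x =>
          simp only [TensorProduct.assoc_tmul, TensorProduct.map_tmul, LinearMap.id_coe,
            id_eq, LinearEquiv.coe_coe]
          rw [eps3_tmul, IL_tmul, EE_tmul]
          simp [Algebra.algebraMap_eq_smul_one, tmul_smul]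
      | add v₁ v₂ h₁ h₂ =>
          simp only [TensorProduct.tmul_add, TensorProduct.add_tmul, map_add] at h₁ h₂ ⊢
          rw [h₁, h₂]
  | add T₁ T₂ h₁ h₂ =>
      simp only [TensorProduct.add_tmul, map_add] at h₁ h₂ ⊢
      rw [h₁, h₂]

lemma eps3_A4 (Q : QuasiHopf G) (T : G ⊗[ℂ] (M ⊗[ℂ] G)) :
    eps3 Q (TensorProduct.map LinearMap.id
        (TensorProduct.map LinearMap.id Q.comul.toLinearMap) T) = T := by
  induction T using TensorProduct.induction_on with
  | zero => simp
  | tmul c v =>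
      induction v using TensorProduct.induction_on with
      | zero => simp
      | tmul n y =>
          simp only [TensorProduct.map_tmul, LinearMap.id_coe, id_eq,
            AlgHom.toLinearMap_apply]
          rw [eps3_tmul, IL_tmul, Q.counit_comul_left]
      | add v₁ v₂ h₁ h₂ =>
          simp only [TensorProduct.tmul_add, map_add] at h₁ h₂ ⊢
          rw [h₁, h₂]
  | add T₁ T₂ h₁ h₂ =>
      simp only [map_add] at h₁ h₂ ⊢
      rw [h₁, h₂]

lemma eps3_assoc (Q : QuasiHopf G) (l : G ⊗[ℂ] M) (w : G ⊗[ℂ] G) :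
    eps3 Q ((TensorProduct.assoc ℂ G M (G ⊗[ℂ] G)) (l ⊗ₜ[ℂ] w)) =
      (TensorProduct.assoc ℂ G M G)
        (l ⊗ₜ[ℂ] (TensorProduct.lid ℂ G)
          (TensorProduct.map Q.counit.toLinearMap LinearMap.id w)) := by
  induction l using TensorProduct.induction_on with
  | zero => simp
  | tmul a n =>
      rw [TensorProduct.assoc_tmul, TensorProduct.assoc_tmul, eps3_tmul, IL_tmul]
  | add l₁ l₂ h₁ h₂ =>
      simp only [TensorProduct.add_tmul, map_add] at h₁ h₂ ⊢
      rw [h₁, h₂]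

lemma eps3_A5 (Q : QuasiHopf G) (L : LeftQCoaction G M Q.toQuasiBialg)
    (R : RightQCoaction G M Q.toQuasiBialg) :
    eps3 Q ((TensorProduct.assoc ℂ G M (G ⊗[ℂ] G))
        (TensorProduct.map L.lam.toLinearMap LinearMap.id R.phiR)) = 1 := by
  have key : ∀ s : M ⊗[ℂ] (G ⊗[ℂ] G),
      eps3 Q ((TensorProduct.assoc ℂ G M (G ⊗[ℂ] G))
          (TensorProduct.map L.lam.toLinearMap LinearMap.id s)) =
        (TensorProduct.assoc ℂ G M G)
          (TensorProduct.map L.lam.toLinearMap LinearMap.id (IL Q s)) := by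
    intro s
    induction s using TensorProduct.induction_on with
    | zero => simp
    | tmul m w =>
        rw [TensorProduct.map_tmul, eps3_assoc, IL_tmul, TensorProduct.map_tmul]
        simp
    | add s₁ s₂ h₁ h₂ =>
        simp only [map_add] at h₁ h₂ ⊢
        rw [h₁, h₂]
  rw [key R.phiR, show IL Q R.phiR = 1 from R.counit_phiR_mid]
  rw [Algebra.TensorProduct.one_def, TensorProduct.map_tmul]
  simp [Algebra.TensorProduct.one_def]

end Statement18Aux

/-- Let `(λ, ρ, φ_λ, φ_ρ, φ_λρ)` be a quasi-commuting pair of coactions of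
a quasi-Hopf algebra `G` on `M`, and `q_ρ = φ_ρ¹ ⊗ S⁻¹(α φ_ρ³) φ_ρ²`.  Then
`(λ ⊗ id)(q_ρ)·φ_λρ⁻¹ = (1 ⊗ 1 ⊗ S⁻¹(φ_λρ³))·(φ_λρ¹ ⊗ q_ρ·ρ(φ_λρ²))` in `G ⊗ M ⊗ G`. -/
theorem statement18
    (Q : QuasiHopf G)
    (L : LeftQCoaction G M Q.toQuasiBialg) (R : RightQCoaction G M Q.toQuasiBialg)
    (phiLR phiLRInv : G ⊗[ℂ] (M ⊗[ℂ] G))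
    (hLR_mul_inv : phiLR * phiLRInv = 1)
    (hLR_inv_mul : phiLRInv * phiLR = 1)
    -- `φ_λρ · (λ ⊗ id)(ρ(m)) = (id ⊗ ρ)(λ(m)) · φ_λρ`
    (hLR_intertwine : ∀ m : M,
      phiLR *
          (TensorProduct.assoc ℂ G M G)
            (TensorProduct.map L.lam.toLinearMap LinearMap.id (R.rho m)) =
        TensorProduct.map LinearMap.id R.rho.toLinearMap (L.lam m) * phiLR)
    -- mixed pentagon `(1 ⊗ φ_λρ)(id ⊗ λ ⊗ id)(φ_λρ)(φ_λ ⊗ 1) =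
    --                 (id ⊗ id ⊗ ρ)(φ_λ)(Δ ⊗ id ⊗ id)(φ_λρ)`
    (hLR_pentagon1 :
      ((1 : G) ⊗ₜ[ℂ] phiLR) *
          TensorProduct.map LinearMap.id
            ((TensorProduct.assoc ℂ G M G).toLinearMap ∘ₗ
              TensorProduct.map L.lam.toLinearMap LinearMap.id) phiLR *
          TensorProduct.map LinearMap.id (TensorProduct.assoc ℂ G M G).toLinearMap
            ((TensorProduct.assoc ℂ G (G ⊗[ℂ] M) G) (L.phiL ⊗ₜ[ℂ] (1 : G))) =
        TensorProduct.map LinearMap.id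
            (TensorProduct.map LinearMap.id R.rho.toLinearMap) L.phiL *
          (TensorProduct.assoc ℂ G G (M ⊗[ℂ] G))
            (TensorProduct.map Q.comul.toLinearMap LinearMap.id phiLR))
    -- mixed pentagon `(1 ⊗ φ_ρ)(id ⊗ ρ ⊗ id)(φ_λρ)(φ_λρ ⊗ 1) =
    --                 (id ⊗ id ⊗ Δ)(φ_λρ)(λ ⊗ id ⊗ id)(φ_ρ)`
    (hLR_pentagon2 :
      ((1 : G) ⊗ₜ[ℂ] R.phiR) *
          TensorProduct.map LinearMap.id
            ((TensorProduct.assoc ℂ M G G).toLinearMap ∘ₗ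
              TensorProduct.map R.rho.toLinearMap LinearMap.id) phiLR *
          TensorProduct.map LinearMap.id (TensorProduct.assoc ℂ M G G).toLinearMap
            ((TensorProduct.assoc ℂ G (M ⊗[ℂ] G) G) (phiLR ⊗ₜ[ℂ] (1 : G))) =
        TensorProduct.map LinearMap.id
            (TensorProduct.map LinearMap.id Q.comul.toLinearMap) phiLR *
          (TensorProduct.assoc ℂ G M (G ⊗[ℂ] G))
            (TensorProduct.map L.lam.toLinearMap LinearMap.id R.phiR)) :
    (TensorProduct.assoc ℂ G M G)
        (TensorProduct.map L.lam.toLinearMap LinearMap.id (qRho Q R)) * phiLRInv =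
      TensorProduct.map LinearMap.id (thetaRQ Q R (qRho Q R)) phiLR := by
  have hF := congrArg (FF Q) hLR_pentagon2
  rw [FF_L1, FF_L2, FF_L3, FF_L4] at hF
  have hE := congrArg (eps3 Q) hLR_pentagon2
  rw [map_mul, map_mul, map_mul, eps3_A1, eps3_A2, eps3_A3, eps3_A4, eps3_A5, one_mul, mul_one] at hE
  have hEone : EE Q phiLR = 1 := by
    have h2 := congrArg (fun z => phiLRInv * z) hE
    simpa [← mul_assoc, hLR_inv_mul] using h2
  rw [hEone, one_mul] at hF
  rw [← hF, mul_assoc, hLR_mul_inv, mul_one]
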